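/- Let G be a simple graph on a vertex type V, and let φ', φ : Sym2 V → Fin K be two classifications of edges such that φ'(e) ≤ φ(e) for every edge e of G. Then for every walk w in G, the class-count vector of w under φ' is at most the class-count vector of w under φ in the colex order: θ_{φ'}(w) ≤_colex θ_φ(w). -/

import Mathlib

open scoped NNReal

/-- The colexicographic strict order on `Fin K → ℕ`. -/
def ColexLt {K : ℕ} (a b : Fin K → ℕ) : Prop :=
  ∃ k, a k < b k ∧ ∀ j, k < j → a j = b j

/-- The colexicographic order: `a ≤_colex b` iff `a <_colex b` or `a = b`. -/
def ColexLe {K : ℕ} (a b : Fin K → ℕ) : Prop :=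
  ColexLt a b ∨ a = b

/-- The class-count vector of a walk: `theta G φ w k` is the number of edges of `w`
(with multiplicity) whose class under `φ` is `k`. -/
def theta {V : Type*} {K : ℕ} (G : SimpleGraph V) (φ : Sym2 V → Fin K)
    {s g : V} (w : G.Walk s g) : Fin K → ℕ :=
  fun k => w.edges.countP (fun e => decide (φ e = k))

/-- The total weight of a walk: the sum of `c` over its edges (with multiplicity). -/
def weight {V : Type*} (G : SimpleGraph V) (c : Sym2 V → ℝ≥0)
    {s g : V} (w : G.Walk s g) : ℝ≥0 :=
  (w.edges.map c).sum

/-- The largest class `k` with `theta G φ w k > 0`, for a walk with at least one edge. -/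
def maxClass {V : Type*} {K : ℕ} (G : SimpleGraph V) (φ : Sym2 V → Fin K)
    {s g : V} (w : G.Walk s g) (hw : w.edges ≠ []) : Fin K :=
  (Finset.univ.filter fun k => 0 < theta G φ w k).max' (by
    obtain ⟨e, he⟩ := List.exists_mem_of_ne_nil w.edges hw
    refine ⟨φ e, ?_⟩
    refine Finset.mem_filter.mpr ⟨Finset.mem_univ _, ?_⟩
    show 0 < List.countP (fun x => decide (φ x = φ e)) w.edges
    exact List.countP_pos_iff.mpr ⟨e, he, by simp⟩)

/-- A walk between distinct vertices has at least one edge. -/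
theorem edges_ne_nil_of_ne {V : Type*} {G : SimpleGraph V} {s g : V}
    (h : s ≠ g) (w : G.Walk s g) : w.edges ≠ [] := by
  cases w with
  | nil => exact absurd rfl h
  | cons h' p => simp

/-- Lexicographic order on pairs `(maxClass, count)`. -/
def PairLe {K : ℕ} (p q : Fin K × ℕ) : Prop :=
  p.1 < q.1 ∨ (p.1 = q.1 ∧ p.2 ≤ q.2)

/-- Lexicographic order on keys `(class-count vector, weight)`:
first the colex order on the vectors, then the usual order on weights. -/
def KeyLe {K : ℕ} (p q : (Fin K → ℕ) × ℝ≥0) : Prop :=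
  ColexLt p.1 q.1 ∨ (p.1 = q.1 ∧ p.2 ≤ q.2)

lemma colexLe_inc {K : ℕ} {a b : Fin K → ℕ} {k' k : Fin K} (hk : k' ≤ k)
    (hab : ColexLe a b) :
    ColexLe (fun j => a j + if j = k' then 1 else 0)
      (fun j => b j + if j = k then 1 else 0) := by
  rcases eq_or_lt_of_le hk with rfl | hk
  · rcases hab with ⟨m, hm, hj⟩ | rfl
    · exact Or.inl ⟨m, Nat.add_lt_add_right hm _,
        fun j hj' => by simp [hj j hj']⟩
    · exact Or.inr rfl
  · rcases hab with ⟨m, hm, hj⟩ | rfl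
    · rcases lt_or_ge m k with hmk | hkm
      · refine Or.inl ⟨k, ?_, fun j hj' => ?_⟩
        · have : a k = b k := hj k hmk
          simp [hk.ne', this]
        · have h1 : j ≠ k := hj'.ne'
          have h2 : j ≠ k' := (hk.trans hj').ne'
          simp [h1, h2, hj j (hmk.trans hj')]
      · refine Or.inl ⟨m, ?_, fun j hj' => ?_⟩
        · have hmk' : m ≠ k' := by
            rintro rfl; exact absurd hkm (not_le.mpr hk)
          rcases eq_or_ne m k with rfl | hne
          · simp only [hmk', if_false, if_neg, if_pos rfl]
            omega
          · simp [hmk', hne]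
            exact hm
        · have h1 : j ≠ k := fun e => absurd (e ▸ hj') (not_lt.mpr hkm)
          have h2 : j ≠ k' := fun e => absurd (e ▸ (hk.trans_le hkm)) (not_lt.mpr hj'.le)
          simp [h1, h2, hj j hj']
    · refine Or.inl ⟨k, ?_, fun j hj' => ?_⟩
      · simp [hk.ne']
      · simp [hj'.ne', (hk.trans hj').ne']

/-- If `φ'` is pointwise at most `φ` on the edges of `G`, then for every walk `w`,
the class-count vector of `w` under `φ'` is at most that under `φ` in the colex order. -/
theorem theta_mono_colexLe {V : Type*} {K : ℕ}
    (G : SimpleGraph V) (φ' φ : Sym2 V → Fin K)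
    (h : ∀ e ∈ G.edgeSet, φ' e ≤ φ e) {s g : V} (w : G.Walk s g) :
    ColexLe (theta G φ' w) (theta G φ w) := by
  induction w with
  | nil => exact Or.inr rfl
  | @cons u v g hadj p ih =>
    have he : s(u, v) ∈ G.edgeSet := hadj
    have key := colexLe_inc (h _ he) ih
    have e1 : theta G φ' (SimpleGraph.Walk.cons hadj p)
        = fun j => theta G φ' p j + if φ' s(u, v) = j then 1 else 0 := by
      funext j
      simp [theta, List.countP_cons, eq_comm]
    have e2 : theta G φ (SimpleGraph.Walk.cons hadj p)
        = fun j => theta G φ p j + if φ s(u, v) = j then 1 else 0 := by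
      funext j
      simp [theta, List.countP_cons, eq_comm]
    rw [e1, e2]
    convert key using 2 <;> simp [eq_comm]
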